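/- Let α > 0 and β₁, β₂ be real numbers with β₂ > β₁ > 1. Then the Turán type inequality E_{α,β₂}(z)·E_{α,β₁−1}(z) − E_{α,β₁}(z)·E_{α,β₂−1}(z) + (β₂−β₁)·E_{α,β₁}(z)·E_{α,β₂}(z) ≥ 0 holds for all z > 0. -/

import Mathlib

open Real Filter Finset

/-- Log-convexity consequence: `Γ(x+δ)Γ(y) ≤ Γ(x)Γ(y+δ)` for `0 < x ≤ y`, `0 ≤ δ`. -/
lemma gamma_cross (x y δ : ℝ) (hx : 0 < x) (hxy : x ≤ y) (hδ : 0 ≤ δ) :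
    Real.Gamma (x + δ) * Real.Gamma y ≤ Real.Gamma x * Real.Gamma (y + δ) := by
  rcases eq_or_lt_of_le hxy with rfl | hxy
  · rw [mul_comm]
  rcases eq_or_lt_of_le hδ with rfl | hδ
  · simp [mul_comm]
  have hy : 0 < y := hx.trans hxy
  have h1 : (0:ℝ) < y - x + δ := by linarith
  set lam : ℝ := (y - x) / (y - x + δ) with hlam
  have hlam0 : 0 ≤ lam := div_nonneg (by linarith) h1.le
  have hlam1 : 0 ≤ 1 - lam := by
    rw [sub_nonneg, hlam, div_le_one h1]; linarith
  have hxmem : x ∈ Set.Ioi (0:ℝ) := hx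
  have hydmem : y + δ ∈ Set.Ioi (0:ℝ) := by
    simp only [Set.mem_Ioi]; linarith
  have i1 := Real.convexOn_log_Gamma.2 hxmem hydmem hlam0 hlam1 (by ring)
  have i2 := Real.convexOn_log_Gamma.2 hxmem hydmem hlam1 hlam0 (by ring)
  have e1 : lam • x + (1 - lam) • (y + δ) = x + δ := by
    simp only [smul_eq_mul, hlam]; field_simp; ring
  have e2 : (1 - lam) • x + lam • (y + δ) = y := by
    simp only [smul_eq_mul, hlam]; field_simp; ring
  rw [e1] at i1
  rw [e2] at i2
  simp only [Function.comp_apply, smul_eq_mul] at i1 i2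
  have hp1 : 0 < Real.Gamma (x + δ) * Real.Gamma y := by
    apply mul_pos (Real.Gamma_pos_of_pos (by linarith)) (Real.Gamma_pos_of_pos hy)
  have hp2 : 0 < Real.Gamma x * Real.Gamma (y + δ) := by
    apply mul_pos (Real.Gamma_pos_of_pos hx) (Real.Gamma_pos_of_pos (by linarith))
  rw [← Real.log_le_log_iff hp1 hp2,
    Real.log_mul (by positivity) (by positivity),
    Real.log_mul (by positivity) (by positivity)]
  linarith

/-- Eventually `Γ(w+α) ≥ T·Γ(w)`: the Gamma ratio grows without bound. -/
lemma gamma_ratio_large (α T : ℝ) (hα : 0 < α) (hT : 0 < T) :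
    ∃ y : ℝ, 0 < y ∧ T * Real.Gamma y ≤ Real.Gamma (y + α) := by
  set k : ℕ := ⌈1/α⌉₊ with hk
  have hk1 : 1 ≤ k := Nat.one_le_ceil_iff.mpr (by positivity)
  have hkα : 1 ≤ (k : ℝ) * α := by
    have h1 := Nat.le_ceil (1/α)
    calc (1:ℝ) = (1/α) * α := by field_simp
    _ ≤ (k:ℝ) * α := by
        apply mul_le_mul_of_nonneg_right _ hα.le
        exact_mod_cast h1
  set x : ℝ := max 2 (T^k) with hxdef
  have hx2 : 2 ≤ x := le_max_left _ _
  have hxT : T^k ≤ x := le_max_right _ _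
  have hx0 : (0:ℝ) < x := lt_of_lt_of_le (by norm_num) hx2
  set y : ℝ := x + ((k:ℝ) - 1) * α with hydef
  have hk1' : (1:ℝ) ≤ (k:ℝ) := by exact_mod_cast hk1
  have hy0 : 0 < y := by
    have : 0 ≤ ((k:ℝ) - 1) * α := mul_nonneg (by linarith) hα.le
    rw [hydef]; linarith
  refine ⟨y, hy0, ?_⟩
  have hΓy : 0 < Real.Gamma y := Real.Gamma_pos_of_pos hy0
  have hΓyα : 0 < Real.Gamma (y + α) := Real.Gamma_pos_of_pos (by linarith)
  have hΓx : 0 < Real.Gamma x := Real.Gamma_pos_of_pos hx0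
  -- inductive bound
  have ind : ∀ i : ℕ, i ≤ k →
      Real.Gamma (x + i * α) * Real.Gamma y ^ i
        ≤ Real.Gamma x * Real.Gamma (y + α) ^ i := by
    intro i
    induction i with
    | zero => intro _; simp
    | succ i ih =>
      intro hik
      have hik' : (i:ℝ) + 1 ≤ (k:ℝ) := by exact_mod_cast hik
      have hxi0 : 0 < x + i * α := by
        have : 0 ≤ (i:ℝ) * α := by positivity
        linarith
      have hxiy : x + i * α ≤ y := by
        rw [hydef]
        have : (i:ℝ) * α ≤ ((k:ℝ) - 1) * α :=
          mul_le_mul_of_nonneg_right (by linarith) hα.le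
        linarith
      have step := gamma_cross (x + i * α) y α hxi0 hxiy hα.le
      have harg : x + (i + 1 : ℕ) * α = x + i * α + α := by push_cast; ring
      rw [harg]
      calc Real.Gamma (x + i * α + α) * Real.Gamma y ^ (i + 1)
          = (Real.Gamma (x + i * α + α) * Real.Gamma y) * Real.Gamma y ^ i := by ring
        _ ≤ (Real.Gamma (x + i * α) * Real.Gamma (y + α)) * Real.Gamma y ^ i := by
            apply mul_le_mul_of_nonneg_right step (by positivity)
        _ = Real.Gamma (y + α) * (Real.Gamma (x + i * α) * Real.Gamma y ^ i) := by ring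
        _ ≤ Real.Gamma (y + α) * (Real.Gamma x * Real.Gamma (y + α) ^ i) := by
            apply mul_le_mul_of_nonneg_left (ih (by omega)) hΓyα.le
        _ = Real.Gamma x * Real.Gamma (y + α) ^ (i + 1) := by ring
  have indk := ind k le_rfl
  -- T^k Γ x ≤ Γ (x + k α)
  have hmono : Real.Gamma (x + 1) ≤ Real.Gamma (x + k * α) := by
    rcases eq_or_lt_of_le hkα with h | h
    · rw [show x + (k:ℝ)*α = x + 1 by linarith]
    · exact le_of_lt (Real.Gamma_strictMonoOn_Ici (by simp only [Set.mem_Ici]; linarith)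
        (by simp only [Set.mem_Ici]; linarith) (by linarith))
  have hTk : T^k * Real.Gamma x ≤ Real.Gamma (x + k * α) := by
    have h1 : Real.Gamma (x + 1) = x * Real.Gamma x := Real.Gamma_add_one hx0.ne'
    have : T^k * Real.Gamma x ≤ x * Real.Gamma x :=
      mul_le_mul_of_nonneg_right hxT hΓx.le
    linarith
  -- combine
  have hcomb : T^k * Real.Gamma y ^ k ≤ Real.Gamma (y + α) ^ k := by
    have h2 : T^k * Real.Gamma x * Real.Gamma y ^ k
        ≤ Real.Gamma x * Real.Gamma (y + α) ^ k := by
      calc T^k * Real.Gamma x * Real.Gamma y ^ k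
          = (T^k * Real.Gamma x) * Real.Gamma y ^ k := by ring
        _ ≤ Real.Gamma (x + k * α) * Real.Gamma y ^ k :=
            mul_le_mul_of_nonneg_right hTk (by positivity)
        _ ≤ Real.Gamma x * Real.Gamma (y + α) ^ k := indk
    have h3 : Real.Gamma x * (T^k * Real.Gamma y ^ k)
        ≤ Real.Gamma x * Real.Gamma (y + α) ^ k := by linarith [h2]
    exact le_of_mul_le_mul_left h3 hΓx
  have := le_of_pow_le_pow_left₀ (Nat.one_le_iff_ne_zero.mp hk1) hΓyα.le
    (by rw [mul_pow]; exact hcomb)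
  exact this

lemma summable_ml (α β z : ℝ) (hα : 0 < α) (hβ : 0 < β) (hz : 0 < z) :
    Summable (fun n : ℕ => z ^ n / Real.Gamma (α * n + β)) := by
  obtain ⟨y, hy0, hy⟩ := gamma_ratio_large α (2 * z) hα (by positivity)
  have hΓy : 0 < Real.Gamma y := Real.Gamma_pos_of_pos hy0
  apply summable_of_ratio_norm_eventually_le (r := 1/2) (by norm_num)
  have htend : Tendsto (fun n : ℕ => α * n + β) atTop atTop :=
    tendsto_atTop_add_const_right _ β
      (Tendsto.const_mul_atTop hα tendsto_natCast_atTop_atTop)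
  filter_upwards [htend.eventually_ge_atTop y] with n hn
  have hw0 : 0 < α * n + β := lt_of_lt_of_le hy0 hn
  have hΓ1 : 0 < Real.Gamma (α * n + β) := Real.Gamma_pos_of_pos hw0
  have hΓ2 : 0 < Real.Gamma (α * n + β + α) := Real.Gamma_pos_of_pos (by linarith)
  have hratio : 2 * z * Real.Gamma (α * n + β) ≤ Real.Gamma (α * n + β + α) := by
    have hc := gamma_cross y (α * n + β) α hy0 hn hα.le
    have h1 : (2 * z * Real.Gamma (α * n + β)) * Real.Gamma y
        ≤ Real.Gamma (α * n + β + α) * Real.Gamma y := by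
      calc (2 * z * Real.Gamma (α * n + β)) * Real.Gamma y
          = (2 * z * Real.Gamma y) * Real.Gamma (α * n + β) := by ring
        _ ≤ Real.Gamma (y + α) * Real.Gamma (α * n + β) :=
            mul_le_mul_of_nonneg_right hy hΓ1.le
        _ ≤ Real.Gamma y * Real.Gamma (α * n + β + α) := hc
        _ = Real.Gamma (α * n + β + α) * Real.Gamma y := by ring
    exact le_of_mul_le_mul_right h1 hΓy
  have harg : α * ((n:ℝ) + 1) + β = α * n + β + α := by ring
  rw [Real.norm_eq_abs, Real.norm_eq_abs, abs_of_nonneg (by positivity),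
    abs_of_nonneg (by positivity)]
  push_cast
  rw [harg]
  calc z ^ (n+1) / Real.Gamma (α * n + β + α)
      ≤ z ^ (n+1) / (2 * z * Real.Gamma (α * n + β)) := by
        apply div_le_div_of_nonneg_left (by positivity) (by positivity) hratio
    _ = 1/2 * (z ^ n / Real.Gamma (α * n + β)) := by
        rw [pow_succ]; field_simp

set_option maxHeartbeats 2000000 in
lemma key_pair (α β₁ β₂ z : ℝ) (hα : 0 < α) (hβ₁ : 1 < β₁) (hβ : β₁ < β₂) (hz : 0 < z)
    (j k : ℕ) :
    0 ≤ (z^j / Real.Gamma (α*j+β₂) * (z^k / Real.Gamma (α*k+(β₁-1)))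
        - z^j / Real.Gamma (α*j+β₁) * (z^k / Real.Gamma (α*k+(β₂-1)))
        + (β₂-β₁) * (z^j / Real.Gamma (α*j+β₁) * (z^k / Real.Gamma (α*k+β₂))))
      + (z^k / Real.Gamma (α*k+β₂) * (z^j / Real.Gamma (α*j+(β₁-1)))
        - z^k / Real.Gamma (α*k+β₁) * (z^j / Real.Gamma (α*j+(β₂-1)))
        + (β₂-β₁) * (z^k / Real.Gamma (α*k+β₁) * (z^j / Real.Gamma (α*j+β₂)))) := by
  have hj0 : (0:ℝ) ≤ α * j := by positivity
  have hk0 : (0:ℝ) ≤ α * k := by positivity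
  have hA : 0 < Real.Gamma (α*j+β₁) := Real.Gamma_pos_of_pos (by linarith)
  have hB : 0 < Real.Gamma (α*j+β₂) := Real.Gamma_pos_of_pos (by linarith)
  have hC : 0 < Real.Gamma (α*k+β₁) := Real.Gamma_pos_of_pos (by linarith)
  have hD : 0 < Real.Gamma (α*k+β₂) := Real.Gamma_pos_of_pos (by linarith)
  have hj1 : (0:ℝ) < α*j+(β₁-1) := by linarith
  have hj2 : (0:ℝ) < α*j+(β₂-1) := by linarith
  have hk1 : (0:ℝ) < α*k+(β₁-1) := by linarith
  have hk2 : (0:ℝ) < α*k+(β₂-1) := by linarith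
  have hrec : ∀ w : ℝ, 0 < w → Real.Gamma (w + 1) = w * Real.Gamma w :=
    fun w hw => Real.Gamma_add_one hw.ne'
  have eA : Real.Gamma (α*j+(β₁-1)) = Real.Gamma (α*j+β₁) / (α*j+(β₁-1)) := by
    rw [show α*(j:ℝ)+β₁ = (α*j+(β₁-1)) + 1 by ring, hrec _ hj1]
    field_simp
  have eB : Real.Gamma (α*j+(β₂-1)) = Real.Gamma (α*j+β₂) / (α*j+(β₂-1)) := by
    rw [show α*(j:ℝ)+β₂ = (α*j+(β₂-1)) + 1 by ring, hrec _ hj2]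
    field_simp
  have eC : Real.Gamma (α*k+(β₁-1)) = Real.Gamma (α*k+β₁) / (α*k+(β₁-1)) := by
    rw [show α*(k:ℝ)+β₁ = (α*k+(β₁-1)) + 1 by ring, hrec _ hk1]
    field_simp
  have eD : Real.Gamma (α*k+(β₂-1)) = Real.Gamma (α*k+β₂) / (α*k+(β₂-1)) := by
    rw [show α*(k:ℝ)+β₂ = (α*k+(β₂-1)) + 1 by ring, hrec _ hk2]
    field_simp
  set A := Real.Gamma (α*j+β₁)
  set B := Real.Gamma (α*j+β₂)
  set C := Real.Gamma (α*k+β₁)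
  set D := Real.Gamma (α*k+β₂)
  have hsign : 0 ≤ (α*((k:ℝ) - (j:ℝ))) * (A*D - B*C) := by
    rcases le_total j k with h | h
    · have hjk : (j:ℝ) ≤ (k:ℝ) := Nat.cast_le.mpr h
      have hmul : α*(j:ℝ) ≤ α*(k:ℝ) := mul_le_mul_of_nonneg_left hjk hα.le
      have cross := gamma_cross (α*j+β₁) (α*k+β₁) (β₂-β₁) (by linarith)
        (by linarith) (by linarith)
      rw [show α*(j:ℝ)+β₁+(β₂-β₁) = α*j+β₂ by ring,
        show α*(k:ℝ)+β₁+(β₂-β₁) = α*k+β₂ by ring] at cross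
      have : B*C ≤ A*D := cross
      apply mul_nonneg (by nlinarith) (by linarith)
    · have hjk : (k:ℝ) ≤ (j:ℝ) := Nat.cast_le.mpr h
      have hmul : α*(k:ℝ) ≤ α*(j:ℝ) := mul_le_mul_of_nonneg_left hjk hα.le
      have cross := gamma_cross (α*k+β₁) (α*j+β₁) (β₂-β₁) (by linarith)
        (by linarith) (by linarith)
      rw [show α*(j:ℝ)+β₁+(β₂-β₁) = α*j+β₂ by ring,
        show α*(k:ℝ)+β₁+(β₂-β₁) = α*k+β₂ by ring] at cross
      have h1 : 0 ≤ α*((j:ℝ)-(k:ℝ)) := mul_nonneg hα.le (by linarith)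
      have h2 : 0 ≤ B*C - A*D := by nlinarith [cross]
      nlinarith [mul_nonneg h1 h2]
  have heq : (z^j / B * (z^k / Real.Gamma (α*k+(β₁-1)))
        - z^j / A * (z^k / Real.Gamma (α*k+(β₂-1)))
        + (β₂-β₁) * (z^j / A * (z^k / D)))
      + (z^k / D * (z^j / Real.Gamma (α*j+(β₁-1)))
        - z^k / C * (z^j / Real.Gamma (α*j+(β₂-1)))
        + (β₂-β₁) * (z^k / C * (z^j / B)))
      = (z^j * z^k * ((α*((k:ℝ) - (j:ℝ))) * (A*D - B*C))) / (A*B*C*D) := by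
    rw [eA, eB, eC, eD]
    field_simp
    ring
  rw [heq]
  exact div_nonneg (mul_nonneg (by positivity) hsign) (by positivity)

/-- The Mittag-Leffler function `E_{α,β}(z) = ∑_{n=0}^∞ z^n / Γ(α n + β)`. -/
noncomputable def mittagLeffler (α β z : ℝ) : ℝ :=
  ∑' n : ℕ, z ^ n / Real.Gamma (α * n + β)

set_option maxHeartbeats 1000000 in
/-- Turán type inequality for Mittag-Leffler functions with two parameters. -/
theorem mittagLeffler_turan_two_params (α β₁ β₂ : ℝ) (hα : 0 < α)
    (hβ₁ : 1 < β₁) (hβ : β₁ < β₂) :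
    ∀ z : ℝ, 0 < z →
      mittagLeffler α β₂ z * mittagLeffler α (β₁ - 1) z -
          mittagLeffler α β₁ z * mittagLeffler α (β₂ - 1) z +
          (β₂ - β₁) * mittagLeffler α β₁ z * mittagLeffler α β₂ z ≥ 0 := by
  intro z hz
  have hb1 : (0:ℝ) < β₁ - 1 := by linarith
  have hb2 : (0:ℝ) < β₂ - 1 := by linarith
  have hb1' : (0:ℝ) < β₁ := by linarith
  have hb2' : (0:ℝ) < β₂ := by linarith
  have S : ∀ β : ℝ, 0 < β → Summable (fun n : ℕ => z ^ n / Real.Gamma (α * n + β)) :=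
    fun β hb => summable_ml α β z hα hb hz
  have N : ∀ β : ℝ, 0 < β → Summable (fun n : ℕ => ‖z ^ n / Real.Gamma (α * n + β)‖) :=
    fun β hb => summable_norm_iff.mpr (S β hb)
  have hprod : ∀ βa βb : ℝ, 0 < βa → 0 < βb →
      mittagLeffler α βa z * mittagLeffler α βb z
        = ∑' n : ℕ, ∑ kl ∈ antidiagonal n,
            z ^ kl.1 / Real.Gamma (α * kl.1 + βa) * (z ^ kl.2 / Real.Gamma (α * kl.2 + βb)) := by
    intro βa βb ha hb
    simp only [mittagLeffler]
    exact tsum_mul_tsum_eq_tsum_sum_antidiagonal_of_summable_norm (N βa ha) (N βb hb)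
  have hsum : ∀ βa βb : ℝ, 0 < βa → 0 < βb →
      Summable (fun n : ℕ => ∑ kl ∈ antidiagonal n,
        z ^ kl.1 / Real.Gamma (α * kl.1 + βa) * (z ^ kl.2 / Real.Gamma (α * kl.2 + βb))) :=
    fun βa βb ha hb =>
      summable_sum_mul_antidiagonal_of_summable_norm'
        (f := fun n : ℕ => z ^ n / Real.Gamma (α * n + βa))
        (g := fun n : ℕ => z ^ n / Real.Gamma (α * n + βb))
        (N βa ha) (S βa ha) (N βb hb) (S βb hb)
  have s1 := hsum β₂ (β₁ - 1) hb2' hb1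
  have s2 := hsum β₁ (β₂ - 1) hb1' hb2
  have s3 := hsum β₁ β₂ hb1' hb2'
  rw [ge_iff_le, hprod β₂ (β₁ - 1) hb2' hb1, hprod β₁ (β₂ - 1) hb1' hb2, mul_assoc,
    hprod β₁ β₂ hb1' hb2', ← tsum_mul_left, ← Summable.tsum_sub s1 s2,
    ← Summable.tsum_add (s1.sub s2) (s3.mul_left (β₂ - β₁))]
  apply tsum_nonneg
  intro n
  have e1 : (∑ kl ∈ antidiagonal n,
        z ^ kl.1 / Real.Gamma (α * kl.1 + β₂) * (z ^ kl.2 / Real.Gamma (α * kl.2 + (β₁ - 1))))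
      - (∑ kl ∈ antidiagonal n,
        z ^ kl.1 / Real.Gamma (α * kl.1 + β₁) * (z ^ kl.2 / Real.Gamma (α * kl.2 + (β₂ - 1))))
      + (β₂ - β₁) * ∑ kl ∈ antidiagonal n,
        z ^ kl.1 / Real.Gamma (α * kl.1 + β₁) * (z ^ kl.2 / Real.Gamma (α * kl.2 + β₂))
      = ∑ kl ∈ antidiagonal n,
        (z ^ kl.1 / Real.Gamma (α * kl.1 + β₂) * (z ^ kl.2 / Real.Gamma (α * kl.2 + (β₁ - 1)))
          - z ^ kl.1 / Real.Gamma (α * kl.1 + β₁) * (z ^ kl.2 / Real.Gamma (α * kl.2 + (β₂ - 1)))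
          + (β₂ - β₁) * (z ^ kl.1 / Real.Gamma (α * kl.1 + β₁)
              * (z ^ kl.2 / Real.Gamma (α * kl.2 + β₂)))) := by
    rw [Finset.mul_sum, ← Finset.sum_sub_distrib, ← Finset.sum_add_distrib]
  rw [e1]
  set g : ℕ × ℕ → ℝ := fun kl =>
    z ^ kl.1 / Real.Gamma (α * kl.1 + β₂) * (z ^ kl.2 / Real.Gamma (α * kl.2 + (β₁ - 1)))
      - z ^ kl.1 / Real.Gamma (α * kl.1 + β₁) * (z ^ kl.2 / Real.Gamma (α * kl.2 + (β₂ - 1)))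
      + (β₂ - β₁) * (z ^ kl.1 / Real.Gamma (α * kl.1 + β₁)
          * (z ^ kl.2 / Real.Gamma (α * kl.2 + β₂))) with hg
  have hswap : ∑ kl ∈ antidiagonal n, g kl = ∑ kl ∈ antidiagonal n, g kl.swap := by
    conv_lhs => rw [← Finset.HasAntidiagonal.map_swap_antidiagonal, Finset.sum_map]
    rfl
  have hpt : 0 ≤ ∑ kl ∈ antidiagonal n, (g kl + g kl.swap) := by
    apply Finset.sum_nonneg
    intro kl _
    exact key_pair α β₁ β₂ z hα hβ₁ hβ hz kl.1 kl.2
  rw [Finset.sum_add_distrib, ← hswap] at hpt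
  linarith
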